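/- Under the unweighted K-NN classification utility ν with sorted training points, the Shapley values satisfy the recursion s_N = 1[y_N = y_test]/N, and for every 1 ≤ i ≤ N−1, s_i = s_{i+1} + ((1[y_i = y_test] − 1[y_{i+1} = y_test])/K) · (min(K,i)/i). -/

import Mathlib

open Finset

/-- The Shapley value of player `i` in the cooperative game with player set `P`
and utility function `ν`. -/
noncomputable def shapley (P : Finset ℕ) (ν : Finset ℕ → ℝ) (i : ℕ) : ℝ :=
  (1 / (P.card : ℝ)) * ∑ S ∈ (P.erase i).powerset,
    (1 / ((P.card - 1).choose S.card : ℝ)) * (ν (insert i S) - ν S)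

/-- The unweighted K-NN classification utility: training points are sorted by
increasing distance to the test point, so the k-th nearest neighbor within `S`
is the k-th smallest element of `S` (given by the sorted list of `S`). -/
noncomputable def knnUtil (K : ℕ) (y : ℕ → ℕ) (ytest : ℕ) (S : Finset ℕ) : ℝ :=
  (1 / (K : ℝ)) * ∑ k ∈ Finset.range (min K S.card),
    if y ((S.sort (· ≤ ·)).getD k 0) = ytest then (1 : ℝ) else 0

lemma rank_sort (S : Finset ℕ) (k : ℕ) (hk : k < S.card) :
    (S.filter (· < (S.sort (· ≤ ·)).getD k 0)).card = k := by
  set L := S.sort (· ≤ ·) with hL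
  have hlen : L.length = S.card := S.length_sort _
  have hmem : ∀ x, x ∈ L ↔ x ∈ S := fun x => S.mem_sort _
  have hnd : L.Nodup := S.sort_nodup _
  have hmono : ∀ (i j : Fin L.length), i < j → L.get i < L.get j :=
    List.pairwise_iff_get.mp (List.sortedLT_iff_pairwise.mp S.sortedLT_sort)
  have hk' : k < L.length := hlen ▸ hk
  have ek : L.getD k 0 = L.get ⟨k, hk'⟩ := by
    rw [List.getD_eq_getElem _ _ hk']; rfl
  have key : (S.filter (· < L.get ⟨k, hk'⟩)).card = (Finset.range k).card := by
    apply Finset.card_nbij' (fun x => List.idxOf x L) (fun m => L.getD m 0)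
    · intro x hx
      simp only [Finset.mem_coe, Finset.mem_filter] at hx
      obtain ⟨hxS, hxlt⟩ := hx
      have hxL : x ∈ L := (hmem x).mpr hxS
      have hidx : List.idxOf x L < L.length := List.idxOf_lt_length_iff.mpr hxL
      simp only [Finset.mem_coe, Finset.mem_range]
      by_contra hc
      push_neg at hc
      have : L.get ⟨k, hk'⟩ ≤ x := by
        rcases eq_or_lt_of_le hc with h | h
        · have h3 : L.get ⟨k, hk'⟩ = x := by
            have : (⟨k, hk'⟩ : Fin L.length) = ⟨List.idxOf x L, hidx⟩ := Fin.ext h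
            rw [this]
            simpa using List.getElem_idxOf hidx
          omega
        · have h1 := hmono ⟨k, hk'⟩ ⟨List.idxOf x L, hidx⟩ h
          have h2 := List.getElem_idxOf hidx
          simp only [List.get_eq_getElem] at h1 ⊢
          omega
      omega
    · intro m hm
      simp only [Finset.mem_coe, Finset.mem_range] at hm
      have hm' : m < L.length := lt_trans hm hk'
      beta_reduce
      rw [List.getD_eq_getElem _ _ hm']
      simp only [Finset.mem_coe, Finset.mem_filter]
      refine ⟨(hmem _).mp (List.getElem_mem _), ?_⟩
      have := hmono ⟨m, hm'⟩ ⟨k, hk'⟩ (by exact hm)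
      simpa using this
    · intro x hx
      simp only [Finset.mem_coe, Finset.mem_filter] at hx
      have hxL : x ∈ L := (hmem x).mpr hx.1
      have hidx : List.idxOf x L < L.length := List.idxOf_lt_length_iff.mpr hxL
      beta_reduce
      rw [List.getD_eq_getElem _ _ hidx]
      exact List.getElem_idxOf hidx
    · intro m hm
      simp only [Finset.mem_coe, Finset.mem_range] at hm
      have hm' : m < L.length := lt_trans hm hk'
      beta_reduce
      rw [List.getD_eq_getElem _ _ hm']
      exact List.Nodup.idxOf_getElem hnd m hm'
  rw [ek, key, Finset.card_range]

lemma sum_rank (S : Finset ℕ) (K : ℕ) (f : ℕ → ℝ) :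
    ∑ k ∈ Finset.range (min K S.card), f ((S.sort (· ≤ ·)).getD k 0)
      = ∑ j ∈ S, if (S.filter (· < j)).card < K then f j else 0 := by
  have h1 : ∑ k ∈ Finset.range (min K S.card), f ((S.sort (· ≤ ·)).getD k 0)
      = ∑ k ∈ Finset.range S.card,
          if k < K then f ((S.sort (· ≤ ·)).getD k 0) else 0 := by
    rw [← Finset.sum_filter]
    apply Finset.sum_congr _ (fun x _ => rfl)
    ext m
    simp only [Finset.mem_range, Finset.mem_filter]
    omega
  rw [h1]
  set L := S.sort (· ≤ ·) with hL
  have hlen : L.length = S.card := S.length_sort _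
  have hmem : ∀ x, x ∈ L ↔ x ∈ S := fun x => S.mem_sort _
  apply Finset.sum_nbij' (fun k => L.getD k 0) (fun x => (S.filter (· < x)).card)
  · intro k hk
    simp only [Finset.mem_range] at hk
    have hk' : k < L.length := hlen ▸ hk
    rw [List.getD_eq_getElem _ _ hk']
    exact (hmem _).mp (List.getElem_mem _)
  · intro x hx
    simp only [Finset.mem_range]
    have hsub : S.filter (· < x) ⊆ S.erase x := by
      intro z hz
      simp only [Finset.mem_filter] at hz
      exact Finset.mem_erase.mpr ⟨by omega, hz.1⟩
    have h2 := Finset.card_le_card hsub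
    rw [Finset.card_erase_of_mem hx] at h2
    have : 1 ≤ S.card := Finset.card_pos.mpr ⟨x, hx⟩
    omega
  · intro k hk
    simp only [Finset.mem_range] at hk
    exact rank_sort S k hk
  · intro x hx
    have hxL : x ∈ L := (hmem x).mpr hx
    have hidx : List.idxOf x L < L.length := List.idxOf_lt_length_iff.mpr hxL
    have h3 : L.getD (List.idxOf x L) 0 = x := by
      rw [List.getD_eq_getElem _ _ hidx]; exact List.getElem_idxOf hidx
    have h4 : (S.filter (· < x)).card = List.idxOf x L := by
      conv_lhs => rw [← h3]
      exact rank_sort S _ (hlen ▸ hidx)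
    rw [h4, h3]
  · intro k hk
    simp only [Finset.mem_range] at hk
    rw [rank_sort S k hk]

lemma knnUtil_eq (K : ℕ) (y : ℕ → ℕ) (ytest : ℕ) (S : Finset ℕ) :
    knnUtil K y ytest S = (1 / (K : ℝ)) * ∑ j ∈ S,
      if (S.filter (· < j)).card < K then (if y j = ytest then (1:ℝ) else 0) else 0 := by
  rw [knnUtil, sum_rank S K (fun j => if y j = ytest then (1:ℝ) else 0)]

lemma nu_top (K : ℕ) (y : ℕ → ℕ) (ytest N : ℕ) (S : Finset ℕ) (hS : ∀ x ∈ S, x < N) :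
    knnUtil K y ytest (insert N S) - knnUtil K y ytest S =
      if S.card < K then (if y N = ytest then (1:ℝ) else 0) / K else 0 := by
  have hN : N ∉ S := fun h => lt_irrefl N (hS N h)
  rw [knnUtil_eq, knnUtil_eq, Finset.sum_insert hN]
  have h1 : ((insert N S).filter (· < N)).card = S.card := by
    rw [Finset.filter_insert, if_neg (lt_irrefl N)]
    congr 1
    exact Finset.filter_true_of_mem hS
  have h2 : ∀ j ∈ S, ((insert N S).filter (· < j)).card = (S.filter (· < j)).card := by
    intro j hj
    rw [Finset.filter_insert, if_neg (by have := hS j hj; omega)]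
  rw [Finset.sum_congr rfl (fun j hj => by rw [h2 j hj]), h1]
  split_ifs with h <;> ring

lemma nu_pair (K : ℕ) (y : ℕ → ℕ) (ytest i : ℕ) (T : Finset ℕ)
    (hi : i ∉ T) (hi1 : i + 1 ∉ T) :
    knnUtil K y ytest (insert i T) - knnUtil K y ytest (insert (i+1) T) =
      if (T.filter (· < i)).card < K then
        ((if y i = ytest then (1:ℝ) else 0) - (if y (i+1) = ytest then (1:ℝ) else 0)) / K
      else 0 := by
  rw [knnUtil_eq, knnUtil_eq, Finset.sum_insert hi, Finset.sum_insert hi1]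
  have r1 : ((insert i T).filter (· < i)).card = (T.filter (· < i)).card := by
    rw [Finset.filter_insert, if_neg (lt_irrefl i)]
  have r2 : ((insert (i+1) T).filter (· < (i+1))).card = (T.filter (· < i)).card := by
    rw [Finset.filter_insert, if_neg (lt_irrefl (i+1))]
    congr 1
    apply Finset.filter_congr
    intro x hx
    have hxi : x ≠ i := fun h => hi (h ▸ hx)
    omega
  have r3 : ∀ j ∈ T, ((insert i T).filter (· < j)).card
      = ((insert (i+1) T).filter (· < j)).card := by
    intro j hj
    have hji : j ≠ i := fun h => hi (h ▸ hj)
    have hji1 : j ≠ i + 1 := fun h => hi1 (h ▸ hj)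
    rw [Finset.filter_insert, Finset.filter_insert]
    by_cases h : i < j
    · have h' : i + 1 < j := by omega
      rw [if_pos h, if_pos h', Finset.card_insert_of_notMem (fun hc => hi (Finset.mem_filter.mp hc).1),
        Finset.card_insert_of_notMem (fun hc => hi1 (Finset.mem_filter.mp hc).1)]
    · have h' : ¬ (i + 1 < j) := by omega
      rw [if_neg h, if_neg h']
  rw [Finset.sum_congr rfl (fun j hj => by rw [r3 j hj]), r1, r2]
  split_ifs with h <;> ring

lemma sum_powerset_union (B : Finset ℕ) :
    ∀ (A : Finset ℕ), Disjoint A B → ∀ (f : Finset ℕ → ℝ),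
      ∑ T ∈ (A ∪ B).powerset, f T = ∑ S ∈ A.powerset, ∑ U ∈ B.powerset, f (S ∪ U) := by
  intro A
  induction A using Finset.induction_on with
  | empty =>
    intro _ f
    rw [Finset.empty_union, Finset.powerset_empty, Finset.sum_singleton]
    exact Finset.sum_congr rfl fun U _ => by rw [Finset.empty_union]
  | @insert a A' ha ih =>
    intro hdisj f
    have haB : a ∉ B := fun h =>
      (Finset.disjoint_left.mp hdisj (Finset.mem_insert_self a A')) h
    have hA'B : Disjoint A' B := hdisj.mono_left (Finset.subset_insert a A')
    have haA'B : a ∉ A' ∪ B := by simp [ha, haB]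
    rw [Finset.insert_union, Finset.sum_powerset_insert haA'B, ih hA'B f,
      ih hA'B (fun T => f (insert a T)), Finset.sum_powerset_insert ha]
    congr 1
    refine Finset.sum_congr rfl fun S _ => Finset.sum_congr rfl fun U _ => ?_
    rw [Finset.insert_union]

lemma sum_powerset_cardfun (P : Finset ℕ) (f : ℕ → ℝ) :
    ∑ S ∈ P.powerset, f S.card
      = ∑ j ∈ Finset.range (P.card + 1), (P.card.choose j : ℝ) * f j := by
  rw [Finset.sum_powerset]
  refine Finset.sum_congr rfl fun j hj => ?_
  rw [Finset.sum_congr rfl (fun S hS => by rw [(Finset.mem_powersetCard.mp hS).2]),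
    Finset.sum_const, Finset.card_powersetCard, nsmul_eq_mul]


lemma choose_nz {n k : ℕ} (h : k ≤ n) : ((n.choose k : ℝ)) ≠ 0 :=
  Nat.cast_ne_zero.mpr (Nat.choose_pos h).ne'

lemma inv_choose_add (q a : ℕ) (ha : a ≤ q) :
    (1:ℝ) / ((q+1).choose a) + 1 / ((q+1).choose (a+1))
      = ((q:ℝ)+2) / (((q:ℝ)+1) * (q.choose a)) := by
  have h1 : ((q+1).choose a : ℝ) ≠ 0 := choose_nz (by omega)
  have h2 : ((q+1).choose (a+1) : ℝ) ≠ 0 := choose_nz (by omega)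
  have h3 : ((q.choose a : ℝ)) ≠ 0 := choose_nz ha
  have e1 : ((a:ℝ)+1) * ((q+2).choose (a+1)) = ((q:ℝ)+2) * ((q+1).choose a) := by
    have h := congrArg (Nat.cast (R := ℝ)) (Nat.add_one_mul_choose_eq (q+1) a)
    push_cast at h
    linarith
  have e2 : ((a:ℝ)+1) * ((q+1).choose (a+1)) = ((q:ℝ)+1) * (q.choose a) := by
    have h := congrArg (Nat.cast (R := ℝ)) (Nat.add_one_mul_choose_eq q a)
    push_cast at h
    linarith
  have e3 : ((q+1).choose a : ℝ) + ((q+1).choose (a+1)) = ((q+2).choose (a+1)) := by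
    have h := congrArg (Nat.cast (R := ℝ)) (Nat.choose_succ_succ (q+1) a)
    push_cast at h
    linarith
  have ha1 : ((a:ℝ)+1) ≠ 0 := by positivity
  have key : (((q+1).choose a : ℝ) + ((q+1).choose (a+1))) * (((q:ℝ)+1) * (q.choose a))
      = ((q:ℝ)+2) * (((q+1).choose a : ℝ) * ((q+1).choose (a+1))) := by
    apply mul_left_cancel₀ ha1
    linear_combination ((a:ℝ)+1) * ((q:ℝ)+1) * ((q.choose a : ℝ)) * e3
      + ((q:ℝ)+1) * ((q.choose a : ℝ)) * e1
      - ((q:ℝ)+2) * (((q+1).choose a : ℝ)) * e2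
  rw [div_add_div _ _ h1 h2, div_eq_div_iff (mul_ne_zero h1 h2)
    (mul_ne_zero (by positivity) h3)]
  linear_combination key

lemma choose_sum_split (n m a : ℕ) :
    ∑ b ∈ Finset.range (m+2), (((m+1).choose b : ℝ)) / ((n.choose (a+b) : ℝ))
        = (∑ b ∈ Finset.range (m+1), ((m.choose b : ℝ)) / ((n.choose (a+b) : ℝ)))
          + ∑ b ∈ Finset.range (m+1), ((m.choose b : ℝ)) / ((n.choose ((a+1)+b) : ℝ)) := by
      rw [Finset.sum_range_succ' (fun b => (((m+1).choose b : ℝ)) / ((n.choose (a+b) : ℝ))) (m+1)]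
      have e4 : ∀ b, ((m+1).choose (b+1) : ℝ) = (m.choose b : ℝ) + (m.choose (b+1) : ℝ) := by
        intro b
        have h := congrArg (Nat.cast (R := ℝ)) (Nat.choose_succ_succ m b)
        push_cast at h
        linarith
      have split : ∑ b ∈ Finset.range (m+1), (((m+1).choose (b+1) : ℝ)) / ((n.choose (a+(b+1)) : ℝ))
          = (∑ b ∈ Finset.range (m+1), ((m.choose (b+1) : ℝ)) / ((n.choose (a+(b+1)) : ℝ)))
            + ∑ b ∈ Finset.range (m+1), ((m.choose b : ℝ)) / ((n.choose ((a+1)+b) : ℝ)) := by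
        rw [← Finset.sum_add_distrib]
        refine Finset.sum_congr rfl fun b _ => ?_
        rw [e4 b]
        have : (a+1)+b = a+(b+1) := by omega
        rw [this]
        ring
      rw [split]
      have shift : (((m+1).choose 0 : ℝ)) / ((n.choose (a+0) : ℝ))
            + ∑ b ∈ Finset.range (m+1), ((m.choose (b+1) : ℝ)) / ((n.choose (a+(b+1)) : ℝ))
          = ∑ b ∈ Finset.range (m+1), ((m.choose b : ℝ)) / ((n.choose (a+b) : ℝ)) := by
        have h5 : ∑ b ∈ Finset.range (m+2), ((m.choose b : ℝ)) / ((n.choose (a+b) : ℝ))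
            = ∑ b ∈ Finset.range (m+1), ((m.choose (b+1) : ℝ)) / ((n.choose (a+(b+1)) : ℝ))
              + ((m.choose 0 : ℝ)) / ((n.choose (a+0) : ℝ)) :=
          Finset.sum_range_succ' _ (m+1)
        have h6 : ∑ b ∈ Finset.range (m+2), ((m.choose b : ℝ)) / ((n.choose (a+b) : ℝ))
            = ∑ b ∈ Finset.range (m+1), ((m.choose b : ℝ)) / ((n.choose (a+b) : ℝ)) := by
          rw [Finset.sum_range_succ, Nat.choose_succ_self]
          simp
        rw [h6] at h5
        simp only [Nat.choose_zero_right, Nat.cast_one] at h5 ⊢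
        linarith
      linarith


lemma keyF (n : ℕ) : ∀ (m : ℕ), ∀ (a : ℕ), a + m ≤ n →
    ∑ b ∈ Finset.range (m+1), ((m.choose b : ℝ)) / ((n.choose (a+b) : ℝ))
      = ((n:ℝ)+1) / ((((n-m : ℕ) : ℝ)+1) * (((n-m).choose a : ℝ))) := by
  intro m
  induction m with
  | zero =>
    intro a ha
    have hC : ((n.choose a : ℝ)) ≠ 0 := choose_nz (by omega)
    rw [Finset.sum_range_one]
    simp only [Nat.choose_self, Nat.cast_one, add_zero, Nat.sub_zero]
    field_simp
  | succ m ih =>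
    intro a ha
    have hstep := choose_sum_split n m a
    rw [hstep, ih a (by omega), ih (a+1) (by omega)]
    have hq : ∃ q, n - m = q + 1 ∧ n - (m+1) = q ∧ a + 1 ≤ q + 1 := ⟨n - (m+1), by omega, rfl, by omega⟩
    obtain ⟨q, hq1, hq2, hq3⟩ := hq
    rw [hq1, hq2]
    have := inv_choose_add q a (by omega)
    have hpos : (((q:ℝ)+1) : ℝ) ≠ 0 := by positivity
    have hC1 : (((q+1).choose a : ℝ)) ≠ 0 := choose_nz (by omega)
    have hC2 : (((q+1).choose (a+1) : ℝ)) ≠ 0 := choose_nz (by omega)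
    have hC0 : ((q.choose a : ℝ)) ≠ 0 := choose_nz (by omega)
    push_cast
    field_simp
    field_simp at this
    linear_combination this

/-- Recursion for the Shapley values of the unweighted K-NN classifier:
`s_N = 1[y_N = y_test]/N` and
`s_i = s_{i+1} + ((1[y_i=y_test] − 1[y_{i+1}=y_test])/K)·(min(K,i)/i)`. -/
theorem knn_shapley_recursion (N K : ℕ) (hK1 : 1 ≤ K) (hKN : K ≤ N)
    (y : ℕ → ℕ) (ytest : ℕ) :
    shapley (Finset.Icc 1 N) (knnUtil K y ytest) N =
      (if y N = ytest then (1 : ℝ) else 0) / N ∧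
    ∀ i, 1 ≤ i → i ≤ N - 1 →
      shapley (Finset.Icc 1 N) (knnUtil K y ytest) i =
        shapley (Finset.Icc 1 N) (knnUtil K y ytest) (i + 1) +
          ((if y i = ytest then (1 : ℝ) else 0) -
              (if y (i + 1) = ytest then (1 : ℝ) else 0)) / K *
            (min (K : ℝ) (i : ℝ) / i) := by
  have hN1 : 1 ≤ N := le_trans hK1 hKN
  have hcard : (Finset.Icc 1 N).card = N := by rw [Nat.card_Icc]; omega
  have hK0 : (K : ℝ) ≠ 0 := Nat.cast_ne_zero.mpr (by omega)
  constructor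
  · -- s_N
    set c : ℝ := if y N = ytest then (1 : ℝ) else 0 with hc
    have herase : (Finset.Icc 1 N).erase N = Finset.Icc 1 (N-1) := by
      ext x; simp only [Finset.mem_erase, Finset.mem_Icc]; omega
    rw [shapley, hcard, herase]
    have hstep : ∀ S ∈ (Finset.Icc 1 (N-1)).powerset,
        (1 / ((N - 1).choose S.card : ℝ)) *
          (knnUtil K y ytest (insert N S) - knnUtil K y ytest S)
        = (1 / ((N - 1).choose S.card : ℝ)) * (if S.card < K then c / K else 0) := by
      intro S hS
      rw [nu_top K y ytest N S (fun x hx => by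
        have := Finset.mem_Icc.mp ((Finset.mem_powerset.mp hS) hx); omega)]
    rw [Finset.sum_congr rfl hstep]
    rw [sum_powerset_cardfun (Finset.Icc 1 (N-1))
      (fun t => (1 / ((N - 1).choose t : ℝ)) * (if t < K then c / K else 0))]
    have hcard2 : (Finset.Icc 1 (N-1)).card = N - 1 := by rw [Nat.card_Icc]; omega
    rw [hcard2]
    have hterm : ∀ j ∈ Finset.range (N - 1 + 1),
        ((N-1).choose j : ℝ) * ((1 / ((N - 1).choose j : ℝ)) * (if j < K then c / K else 0))
        = if j < K then c / K else 0 := by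
      intro j hj
      simp only [Finset.mem_range] at hj
      by_cases h : j < K
      · have hnz : (((N-1).choose j : ℝ)) ≠ 0 := choose_nz (by omega)
        simp only [if_pos h]
        field_simp
      · simp only [if_neg h, mul_zero]
    rw [Finset.sum_congr rfl hterm, ← Finset.sum_filter]
    have hfil : (Finset.range (N-1+1)).filter (· < K) = Finset.range K := by
      ext x; simp only [Finset.mem_filter, Finset.mem_range]; omega
    rw [hfil, Finset.sum_const, Finset.card_range, nsmul_eq_mul]
    field_simp
  · -- recursion
    intro i hi1 hiN
    have hN2 : 2 ≤ N := by omega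
    have hi0 : (i:ℝ) ≠ 0 := Nat.cast_ne_zero.mpr (by omega)
    have hNr : (N:ℝ) ≠ 0 := Nat.cast_ne_zero.mpr (by omega)
    set Q : Finset ℕ := ((Finset.Icc 1 N).erase i).erase (i+1) with hQdef
    have hQmem : ∀ x, x ∈ Q ↔ (x ≠ i+1 ∧ x ≠ i ∧ 1 ≤ x ∧ x ≤ N) := by
      intro x
      simp only [hQdef, Finset.mem_erase, Finset.mem_Icc]
    have hiQ : i ∉ Q := fun h => ((hQmem i).mp h).2.1 rfl
    have hi1Q : i+1 ∉ Q := fun h => ((hQmem (i+1)).mp h).1 rfl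
    have he1 : (Finset.Icc 1 N).erase i = insert (i+1) Q := by
      rw [hQdef]
      exact (Finset.insert_erase (by
        rw [Finset.mem_erase, Finset.mem_Icc]; omega)).symm
    have he2 : (Finset.Icc 1 N).erase (i+1) = insert i Q := by
      rw [hQdef, Finset.erase_right_comm]
      exact (Finset.insert_erase (by
        rw [Finset.mem_erase, Finset.mem_Icc]; omega)).symm
    rw [shapley, shapley, hcard, he1, he2,
      Finset.sum_powerset_insert hi1Q, Finset.sum_powerset_insert hiQ]
    have main : (∑ T ∈ Q.powerset,
          (1 / ((N-1).choose T.card : ℝ)) * (knnUtil K y ytest (insert i T) - knnUtil K y ytest T)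
        + ∑ T ∈ Q.powerset,
          (1 / ((N-1).choose (insert (i+1) T).card : ℝ)) *
            (knnUtil K y ytest (insert i (insert (i+1) T)) - knnUtil K y ytest (insert (i+1) T)))
        - (∑ T ∈ Q.powerset,
          (1 / ((N-1).choose T.card : ℝ)) * (knnUtil K y ytest (insert (i+1) T) - knnUtil K y ytest T)
        + ∑ T ∈ Q.powerset,
          (1 / ((N-1).choose (insert i T).card : ℝ)) *
            (knnUtil K y ytest (insert (i+1) (insert i T)) - knnUtil K y ytest (insert i T)))
        = ∑ T ∈ Q.powerset,
            ((1 / ((N-1).choose T.card : ℝ)) + (1 / ((N-1).choose (T.card + 1) : ℝ))) *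
              (if (T.filter (· < i)).card < K then
                ((if y i = ytest then (1:ℝ) else 0) - (if y (i+1) = ytest then (1:ℝ) else 0)) / K
              else 0) := by
      rw [← Finset.sum_add_distrib, ← Finset.sum_add_distrib, ← Finset.sum_sub_distrib]
      refine Finset.sum_congr rfl fun T hT => ?_
      have hTQ := Finset.mem_powerset.mp hT
      have hiT : i ∉ T := fun h => hiQ (hTQ h)
      have hi1T : i+1 ∉ T := fun h => hi1Q (hTQ h)
      have hcomm : insert i (insert (i+1) T) = insert (i+1) (insert i T) := Finset.insert_comm i (i+1) T
      have hc1 : (insert (i+1) T).card = T.card + 1 := Finset.card_insert_of_notMem hi1T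
      have hc2 : (insert i T).card = T.card + 1 := Finset.card_insert_of_notMem hiT
      rw [hc1, hc2, hcomm, ← nu_pair K y ytest i T hiT hi1T]
      ring
    have hAcard : (Finset.Icc 1 (i-1)).card = i - 1 := by rw [Nat.card_Icc]; omega
    have hBcard : (Finset.Icc (i+2) N).card = N - i - 1 := by rw [Nat.card_Icc]; omega
    have hinner : ∀ a : ℕ, a ≤ i - 1 →
        ∑ b ∈ Finset.range ((N-i-1)+1), ((N-i-1).choose b : ℝ) *
            ((1 / ((N-1).choose (a+b) : ℝ)) + (1 / ((N-1).choose (a+b+1) : ℝ)))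
          = (N:ℝ) / ((i:ℝ) * (((i-1).choose a) : ℝ)) := by
      intro a ha
      have hsplit : ∀ b ∈ Finset.range ((N-i-1)+1),
          ((N-i-1).choose b : ℝ) *
            ((1 / ((N-1).choose (a+b) : ℝ)) + (1 / ((N-1).choose (a+b+1) : ℝ)))
          = ((N-i-1).choose b : ℝ) / ((N-1).choose (a+b) : ℝ)
            + ((N-i-1).choose b : ℝ) / ((N-1).choose ((a+1)+b) : ℝ) := by
        intro b _
        have : (a+1)+b = a+b+1 := by omega
        rw [this]
        ring
      rw [Finset.sum_congr rfl hsplit, Finset.sum_add_distrib, ← choose_sum_split (N-1) (N-i-1) a]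
      have hm1 : (N-i-1) + 1 = N - i := by omega
      rw [hm1]
      have := keyF (N-1) (N-i) a (by omega)
      have hsub : (N-1) - (N-i) = i - 1 := by omega
      rw [hsub] at this
      have h2 : (N - i) + 1 = (N-i-1) + 2 := by omega
      rw [← h2]
      rw [this]
      have c1 : (((N-1 : ℕ)) : ℝ) = (N:ℝ) - 1 := by
        have : (1:ℕ) ≤ N := hN1
        push_cast [this]
        ring
      have c2 : (((i-1 : ℕ)) : ℝ) = (i:ℝ) - 1 := by
        have : (1:ℕ) ≤ i := hi1
        push_cast [this]
        ring
      rw [c1, c2]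
      ring_nf
    have hsum : (∑ T ∈ Q.powerset,
            ((1 / ((N-1).choose T.card : ℝ)) + (1 / ((N-1).choose (T.card + 1) : ℝ))) *
              (if (T.filter (· < i)).card < K then
                ((if y i = ytest then (1:ℝ) else 0) - (if y (i+1) = ytest then (1:ℝ) else 0)) / K
              else 0))
        = ((min K i : ℕ) : ℝ) *
            (((if y i = ytest then (1:ℝ) else 0) - (if y (i+1) = ytest then (1:ℝ) else 0)) / K)
            * ((N:ℝ) / (i:ℝ)) := by
      have hQ_eq : Q = Finset.Icc 1 (i-1) ∪ Finset.Icc (i+2) N := by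
        ext x
        rw [hQmem x, Finset.mem_union, Finset.mem_Icc, Finset.mem_Icc]
        omega
      have hdisj : Disjoint (Finset.Icc 1 (i-1)) (Finset.Icc (i+2) N) := by
        rw [Finset.disjoint_left]
        intro x hx hx'
        rw [Finset.mem_Icc] at hx hx'
        omega
      rw [hQ_eq, sum_powerset_union (Finset.Icc (i+2) N) (Finset.Icc 1 (i-1)) hdisj]
      have hSU : ∀ S ∈ (Finset.Icc 1 (i-1)).powerset, ∀ U ∈ (Finset.Icc (i+2) N).powerset,
          ((1 / ((N-1).choose (S ∪ U).card : ℝ)) + (1 / ((N-1).choose ((S ∪ U).card + 1) : ℝ))) *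
              (if ((S ∪ U).filter (· < i)).card < K then
                ((if y i = ytest then (1:ℝ) else 0) - (if y (i+1) = ytest then (1:ℝ) else 0)) / K
              else 0)
          = ((1 / ((N-1).choose (S.card + U.card) : ℝ)) + (1 / ((N-1).choose (S.card + U.card + 1) : ℝ))) *
              (if S.card < K then
                ((if y i = ytest then (1:ℝ) else 0) - (if y (i+1) = ytest then (1:ℝ) else 0)) / K
              else 0) := by
        intro S hS U hU
        have hSA := Finset.mem_powerset.mp hS
        have hUB := Finset.mem_powerset.mp hU
        have hdisjSU : Disjoint S U := Finset.disjoint_of_subset_left hSA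
          (Finset.disjoint_of_subset_right hUB hdisj)
        have hcardSU : (S ∪ U).card = S.card + U.card := Finset.card_union_of_disjoint hdisjSU
        have hfil : ((S ∪ U).filter (· < i)) = S := by
          rw [Finset.filter_union]
          have h1 : S.filter (· < i) = S := Finset.filter_true_of_mem (fun x hx => by
            have := Finset.mem_Icc.mp (hSA hx); omega)
          have h2 : U.filter (· < i) = ∅ := Finset.filter_false_of_mem (fun x hx => by
            have := Finset.mem_Icc.mp (hUB hx); omega)
          rw [h1, h2, Finset.union_empty]
        rw [hcardSU, hfil]
      rw [Finset.sum_congr rfl (fun S hS => Finset.sum_congr rfl (fun U hU => hSU S hS U hU))]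
      have hinner2 : ∀ S ∈ (Finset.Icc 1 (i-1)).powerset,
          (∑ U ∈ (Finset.Icc (i+2) N).powerset,
            ((1 / ((N-1).choose (S.card + U.card) : ℝ)) + (1 / ((N-1).choose (S.card + U.card + 1) : ℝ))) *
              (if S.card < K then
                ((if y i = ytest then (1:ℝ) else 0) - (if y (i+1) = ytest then (1:ℝ) else 0)) / K
              else 0))
          = ((N:ℝ) / ((i:ℝ) * (((i-1).choose S.card) : ℝ))) *
              (if S.card < K then
                ((if y i = ytest then (1:ℝ) else 0) - (if y (i+1) = ytest then (1:ℝ) else 0)) / K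
              else 0) := by
        intro S hS
        have hSA := Finset.mem_powerset.mp hS
        have haS : S.card ≤ i - 1 := hAcard ▸ Finset.card_le_card hSA
        rw [← Finset.sum_mul]
        congr 1
        rw [sum_powerset_cardfun (Finset.Icc (i+2) N)
          (fun b => (1 / ((N-1).choose (S.card + b) : ℝ)) + (1 / ((N-1).choose (S.card + b + 1) : ℝ))),
          hBcard]
        exact hinner S.card haS
      rw [Finset.sum_congr rfl hinner2]
      rw [sum_powerset_cardfun (Finset.Icc 1 (i-1))
        (fun a => ((N:ℝ) / ((i:ℝ) * (((i-1).choose a) : ℝ))) *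
          (if a < K then
            ((if y i = ytest then (1:ℝ) else 0) - (if y (i+1) = ytest then (1:ℝ) else 0)) / K
          else 0)), hAcard]
      have hterm : ∀ a ∈ Finset.range ((i-1)+1),
          ((i-1).choose a : ℝ) * (((N:ℝ) / ((i:ℝ) * (((i-1).choose a) : ℝ))) *
            (if a < K then
              ((if y i = ytest then (1:ℝ) else 0) - (if y (i+1) = ytest then (1:ℝ) else 0)) / K
            else 0))
          = if a < K then
              ((N:ℝ) / (i:ℝ)) *
                (((if y i = ytest then (1:ℝ) else 0) - (if y (i+1) = ytest then (1:ℝ) else 0)) / K)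
            else 0 := by
        intro a ha
        rw [Finset.mem_range] at ha
        have hnz : (((i-1).choose a : ℝ)) ≠ 0 := choose_nz (by omega)
        by_cases h : a < K
        · simp only [if_pos h]
          field_simp
        · simp only [if_neg h, mul_zero]
      rw [Finset.sum_congr rfl hterm, ← Finset.sum_filter]
      have hfil2 : (Finset.range ((i-1)+1)).filter (· < K) = Finset.range (min K i) := by
        ext x
        simp only [Finset.mem_filter, Finset.mem_range]
        omega
      rw [hfil2, Finset.sum_const, Finset.card_range, nsmul_eq_mul]
      ring
    have hfinal := main.trans hsum
    have hNi : (1 / (N:ℝ)) * (((min K i : ℕ) : ℝ) *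
          (((if y i = ytest then (1:ℝ) else 0) - (if y (i+1) = ytest then (1:ℝ) else 0)) / K)
          * ((N:ℝ) / (i:ℝ)))
        = ((if y i = ytest then (1:ℝ) else 0) - (if y (i+1) = ytest then (1:ℝ) else 0)) / K *
            (min (K : ℝ) (i : ℝ) / i) := by
      rw [← Nat.cast_min]
      field_simp
    linear_combination (1 / (N:ℝ)) * hfinal + hNi
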